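/- For every i in Z/3 the following four equivalences hold in SK: b_{i-1}^2 a_i d_{i-1}^2 ~ (b_{i-1} a_i d_{i-1}) d_i^2 (b_{i-1} b_i d_{i-1}) b_i; b_{i-1}^2 c_i d_{i-1}^2 ~ d_i (b_{i-1} d_i d_{i-1}) b_i^2 (b_{i-1} c_i d_{i-1}); b_{i-1}^2 b_i d_{i-1}^2 ~ (b_{i-1} b_i d_{i-1}) d_i^2 (b_{i-1} b_i d_{i-1}) b_i; b_{i-1}^2 d_i d_{i-1}^2 ~ d_i (b_{i-1} d_i d_{i-1}) b_i^2 (b_{i-1} d_i d_{i-1}). -/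

import Mathlib

/-- The 15-letter alphabet A = {a_i, b_i, c_i, d_i, x_i : i ∈ ℤ/3}. -/
inductive Letter : Type
  | a : ZMod 3 → Letter
  | b : ZMod 3 → Letter
  | c : ZMod 3 → Letter
  | d : ZMod 3 → Letter
  | x : ZMod 3 → Letter
  deriving DecidableEq

/-- Words: the free monoid on the alphabet A. -/
abbrev Word := FreeMonoid Letter

def a (i : ZMod 3) : Word := FreeMonoid.of (Letter.a i)
def b (i : ZMod 3) : Word := FreeMonoid.of (Letter.b i)
def c (i : ZMod 3) : Word := FreeMonoid.of (Letter.c i)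
def d (i : ZMod 3) : Word := FreeMonoid.of (Letter.d i)
def x (i : ZMod 3) : Word := FreeMonoid.of (Letter.x i)

/-- t_i = b_{i+1} d_{i-1} d_{i+1} b_{i-1}. -/
def t (i : ZMod 3) : Word := b (i+1) * d (i-1) * d (i+1) * b (i-1)

/-- t'_i = d_{i-1} b_{i+1} b_{i-1} d_{i+1}. -/
def t' (i : ZMod 3) : Word := d (i-1) * b (i+1) * b (i-1) * d (i+1)

/-- The defining relations (1)-(10) of the semigroup SK. -/
inductive SKRel : Word → Word → Prop
  | r1a (i : ZMod 3) : SKRel (a i) (a (i+1) * d (i-1))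
  | r1b (i : ZMod 3) : SKRel (b i) (a (i-1) * c (i+1))
  | r1c (i : ZMod 3) : SKRel (c i) (b (i-1) * c (i+1))
  | r1d (i : ZMod 3) : SKRel (d i) (a (i+1) * c (i-1))
  | r2 (i : ZMod 3) : SKRel (x i) (d (i+1) * x (i-1) * b (i+1))
  | r3 : SKRel (d 0 * d 1 * d 2) 1
  | r4bd (i : ZMod 3) : SKRel (b i * d i) 1
  | r4db (i : ZMod 3) : SKRel (d i * b i) 1
  | r5d (i : ZMod 3) : SKRel (d i * x i * d i) (a i * (d i * x i * d i) * c i)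
  | r5b (i : ZMod 3) : SKRel (b i * x i * b i) (a i * (b i * x i * b i) * c i)
  | r6 (i : ZMod 3) :
      SKRel (x i * (d (i+1) * d i * d (i-1))) ((d (i+1) * d i * d (i-1)) * x i)
  | r7 (i : ZMod 3) (w : Word)
      (hw : w ∈ ({c (i+1), x (i+1), b i * d (i+1) * d i} : Set Word)) :
      SKRel ((d i * c i) * w) (w * (d i * c i))
  | r8 (i : ZMod 3) (w : Word)
      (hw : w ∈ ({a (i+1), b (i+1), c (i+1), x (i+1), b i * d (i+1) * d i} : Set Word)) :
      SKRel ((a i * b i) * w) (w * (a i * b i))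
  | r9 (i : ZMod 3) (w : Word)
      (hw : w ∈ ({a i, b i, c i, x i, b (i-1) * d i * d (i-1)} : Set Word)) :
      SKRel (t i * w) (w * t i)
  | r10 (i : ZMod 3) (w : Word)
      (hw : w ∈ ({a (i+1), b (i+1), c (i+1), x (i+1), b i * d (i+1) * d i} : Set Word)) :
      SKRel ((d i * x i * b i) * w) (w * (d i * x i * b i))

/-- The congruence generated by relations (1)-(10); `skCon u v` means u ~ v,
i.e. u and v have equal images in the presented monoid SK. -/
def skCon : Con Word := conGen SKRel

/-- (41)-(44). -/

lemma skstepC (p s : Word) {l r : Word} (h : skCon l r) : skCon (p * l * s) (p * r * s) :=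
  ((skCon.refl p).mul h).mul (skCon.refl s)

lemma zm1 : ((0:ZMod 3)+1) = 1 := rfl
lemma zm2 : ((1:ZMod 3)+1) = 2 := rfl
lemma zm3 : ((2:ZMod 3)+1) = 0 := rfl
lemma zm4 : ((0:ZMod 3)-1) = 2 := rfl
lemma zm5 : ((1:ZMod 3)-1) = 0 := rfl
lemma zm6 : ((2:ZMod 3)-1) = 1 := rfl

lemma rel_r1a_0 : skCon (a 0) (a 1 * d 2) := by
  have h := ConGen.Rel.of _ _ (SKRel.r1a (0:ZMod 3))
  simp only [t, zm1, zm2, zm3, zm4, zm5, zm6] at h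
  exact h

lemma rel_r1a_1 : skCon (a 1) (a 2 * d 0) := by
  have h := ConGen.Rel.of _ _ (SKRel.r1a (1:ZMod 3))
  simp only [t, zm1, zm2, zm3, zm4, zm5, zm6] at h
  exact h

lemma rel_r1a_2 : skCon (a 2) (a 0 * d 1) := by
  have h := ConGen.Rel.of _ _ (SKRel.r1a (2:ZMod 3))
  simp only [t, zm1, zm2, zm3, zm4, zm5, zm6] at h
  exact h

lemma rel_r1c_0 : skCon (c 0) (b 2 * c 1) := by
  have h := ConGen.Rel.of _ _ (SKRel.r1c (0:ZMod 3))
  simp only [t, zm1, zm2, zm3, zm4, zm5, zm6] at h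
  exact h

lemma rel_r1c_1 : skCon (c 1) (b 0 * c 2) := by
  have h := ConGen.Rel.of _ _ (SKRel.r1c (1:ZMod 3))
  simp only [t, zm1, zm2, zm3, zm4, zm5, zm6] at h
  exact h

lemma rel_r1c_2 : skCon (c 2) (b 1 * c 0) := by
  have h := ConGen.Rel.of _ _ (SKRel.r1c (2:ZMod 3))
  simp only [t, zm1, zm2, zm3, zm4, zm5, zm6] at h
  exact h

lemma rel_r1d_0 : skCon (d 0) (a 1 * c 2) := by
  have h := ConGen.Rel.of _ _ (SKRel.r1d (0:ZMod 3))
  simp only [t, zm1, zm2, zm3, zm4, zm5, zm6] at h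
  exact h

lemma rel_r1d_1 : skCon (d 1) (a 2 * c 0) := by
  have h := ConGen.Rel.of _ _ (SKRel.r1d (1:ZMod 3))
  simp only [t, zm1, zm2, zm3, zm4, zm5, zm6] at h
  exact h

lemma rel_r1d_2 : skCon (d 2) (a 0 * c 1) := by
  have h := ConGen.Rel.of _ _ (SKRel.r1d (2:ZMod 3))
  simp only [t, zm1, zm2, zm3, zm4, zm5, zm6] at h
  exact h

lemma rel_r3 : skCon (d 0 * d 1 * d 2) ((1:Word)) := by
  have h := ConGen.Rel.of _ _ (SKRel.r3)
  exact h

lemma rel_r4bd_0 : skCon (b 0 * d 0) ((1:Word)) := by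
  have h := ConGen.Rel.of _ _ (SKRel.r4bd (0:ZMod 3))
  exact h

lemma rel_r4bd_1 : skCon (b 1 * d 1) ((1:Word)) := by
  have h := ConGen.Rel.of _ _ (SKRel.r4bd (1:ZMod 3))
  exact h

lemma rel_r4bd_2 : skCon (b 2 * d 2) ((1:Word)) := by
  have h := ConGen.Rel.of _ _ (SKRel.r4bd (2:ZMod 3))
  exact h

lemma rel_r4db_0 : skCon (d 0 * b 0) ((1:Word)) := by
  have h := ConGen.Rel.of _ _ (SKRel.r4db (0:ZMod 3))
  exact h

lemma rel_r4db_1 : skCon (d 1 * b 1) ((1:Word)) := by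
  have h := ConGen.Rel.of _ _ (SKRel.r4db (1:ZMod 3))
  exact h

lemma rel_r4db_2 : skCon (d 2 * b 2) ((1:Word)) := by
  have h := ConGen.Rel.of _ _ (SKRel.r4db (2:ZMod 3))
  exact h

lemma rel_r7_0_0 : skCon (d 0 * c 0 * c 1) (c 1 * d 0 * c 0) := by
  have h := ConGen.Rel.of _ _ (SKRel.r7 (0:ZMod 3) (c (0+1)) (Set.mem_insert _ _))
  simp only [t, zm1, zm2, zm3, zm4, zm5, zm6] at h
  exact h

lemma rel_r7_1_0 : skCon (d 1 * c 1 * c 2) (c 2 * d 1 * c 1) := by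
  have h := ConGen.Rel.of _ _ (SKRel.r7 (1:ZMod 3) (c (1+1)) (Set.mem_insert _ _))
  simp only [t, zm1, zm2, zm3, zm4, zm5, zm6] at h
  exact h

lemma rel_r7_2_0 : skCon (d 2 * c 2 * c 0) (c 0 * d 2 * c 2) := by
  have h := ConGen.Rel.of _ _ (SKRel.r7 (2:ZMod 3) (c (2+1)) (Set.mem_insert _ _))
  simp only [t, zm1, zm2, zm3, zm4, zm5, zm6] at h
  exact h

lemma rel_r8_0_1 : skCon (a 0 * b 0 * b 1) (b 1 * a 0 * b 0) := by
  have h := ConGen.Rel.of _ _ (SKRel.r8 (0:ZMod 3) (b (0+1)) (Set.mem_insert_of_mem _ (Set.mem_insert _ _)))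
  simp only [t, zm1, zm2, zm3, zm4, zm5, zm6] at h
  exact h

lemma rel_r8_0_2 : skCon (a 0 * b 0 * c 1) (c 1 * a 0 * b 0) := by
  have h := ConGen.Rel.of _ _ (SKRel.r8 (0:ZMod 3) (c (0+1)) (Set.mem_insert_of_mem _ (Set.mem_insert_of_mem _ (Set.mem_insert _ _))))
  simp only [t, zm1, zm2, zm3, zm4, zm5, zm6] at h
  exact h

lemma rel_r8_1_1 : skCon (a 1 * b 1 * b 2) (b 2 * a 1 * b 1) := by
  have h := ConGen.Rel.of _ _ (SKRel.r8 (1:ZMod 3) (b (1+1)) (Set.mem_insert_of_mem _ (Set.mem_insert _ _)))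
  simp only [t, zm1, zm2, zm3, zm4, zm5, zm6] at h
  exact h

lemma rel_r8_1_2 : skCon (a 1 * b 1 * c 2) (c 2 * a 1 * b 1) := by
  have h := ConGen.Rel.of _ _ (SKRel.r8 (1:ZMod 3) (c (1+1)) (Set.mem_insert_of_mem _ (Set.mem_insert_of_mem _ (Set.mem_insert _ _))))
  simp only [t, zm1, zm2, zm3, zm4, zm5, zm6] at h
  exact h

lemma rel_r8_2_1 : skCon (a 2 * b 2 * b 0) (b 0 * a 2 * b 2) := by
  have h := ConGen.Rel.of _ _ (SKRel.r8 (2:ZMod 3) (b (2+1)) (Set.mem_insert_of_mem _ (Set.mem_insert _ _)))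
  simp only [t, zm1, zm2, zm3, zm4, zm5, zm6] at h
  exact h

lemma rel_r8_2_2 : skCon (a 2 * b 2 * c 0) (c 0 * a 2 * b 2) := by
  have h := ConGen.Rel.of _ _ (SKRel.r8 (2:ZMod 3) (c (2+1)) (Set.mem_insert_of_mem _ (Set.mem_insert_of_mem _ (Set.mem_insert _ _))))
  simp only [t, zm1, zm2, zm3, zm4, zm5, zm6] at h
  exact h

lemma rel_r9_0_1 : skCon (b 1 * d 2 * d 1 * b 2 * b 0) (b 0 * b 1 * d 2 * d 1 * b 2) := by
  have h := ConGen.Rel.of _ _ (SKRel.r9 (0:ZMod 3) (b 0) (Set.mem_insert_of_mem _ (Set.mem_insert _ _)))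
  simp only [t, zm1, zm2, zm3, zm4, zm5, zm6] at h
  exact h

lemma rel_r9_1_1 : skCon (b 2 * d 0 * d 2 * b 0 * b 1) (b 1 * b 2 * d 0 * d 2 * b 0) := by
  have h := ConGen.Rel.of _ _ (SKRel.r9 (1:ZMod 3) (b 1) (Set.mem_insert_of_mem _ (Set.mem_insert _ _)))
  simp only [t, zm1, zm2, zm3, zm4, zm5, zm6] at h
  exact h

lemma rel_r9_2_1 : skCon (b 0 * d 1 * d 0 * b 1 * b 2) (b 2 * b 0 * d 1 * d 0 * b 1) := by
  have h := ConGen.Rel.of _ _ (SKRel.r9 (2:ZMod 3) (b 2) (Set.mem_insert_of_mem _ (Set.mem_insert _ _)))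
  simp only [t, zm1, zm2, zm3, zm4, zm5, zm6] at h
  exact h

lemma skE_2_0 : skCon (b 2 * b 2 * b 0 * d 2 * d 2) (b 2 * b 0 * d 2 * d 0 * d 0 * b 2 * b 0 * d 2 * b 0) :=
  (((((((((((((((skstepC (b 2 * b 2 * b 0 * d 2) (d 2) rel_r4bd_1.symm).trans (skstepC (b 2 * b 2 * b 0 * d 2 * b 1) (d 1 * d 2) rel_r4bd_0.symm)).trans (skstepC (b 2 * b 2 * b 0 * d 2 * b 1) (b 0 * d 0 * d 1 * d 2) rel_r4bd_2.symm)).trans (skstepC (b 2 * b 2 * b 0 * d 2 * b 1 * b 2 * d 2 * b 0) ((1:Word)) rel_r3)).trans (skstepC (b 2 * b 2 * b 0 * d 2 * b 1 * b 2) (d 2 * b 0) rel_r4db_0.symm)).trans (skstepC (b 2 * b 2 * b 0 * d 2 * b 1 * b 2 * d 0) (b 0 * d 2 * b 0) rel_r4db_2.symm)).trans (skstepC (b 2 * b 2 * b 0 * d 2 * b 1 * b 2 * d 0 * d 2) (b 2 * b 0 * d 2 * b 0) rel_r4bd_0.symm)).trans (skstepC (b 2 * b 2 * b 0 * d 2)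 (d 0 * b 2 * b 0 * d 2 * b 0) rel_r9_1_1.symm)).trans (skstepC (b 2 * b 2 * b 0) (d 0 * d 2 * b 0 * b 1 * d 0 * b 2 * b 0 * d 2 * b 0) rel_r4db_2)).trans (skstepC (b 2 * b 2) (d 2 * b 0 * b 1 * d 0 * b 2 * b 0 * d 2 * b 0) rel_r4bd_0)).trans (skstepC (b 2 * b 2 * d 2 * b 0 * b 1) (d 0 * b 2 * b 0 * d 2 * b 0) rel_r4bd_0.symm)).trans (skstepC (b 2 * b 2 * d 2 * b 0 * b 1 * b 0) (d 0 * d 0 * b 2 * b 0 * d 2 * b 0) rel_r3.symm)).trans (skstepC (b 2) (b 0 * b 1 * b 0 * d 0 * d 1 * d 2 * d 0 * d 0 * b 2 * b 0 * d 2 * b 0) rel_r4bd_2)).trans (skstepC (b 2 * b 0 * b 1) (d 1 * d 2 * d 0 * d 0 * b 2 * b 0 * d 2 * b 0) rel_r4bd_0)).trans (skstepC (b 2 * b 0) (d 2 * d 0 * d 0 * b 2 * b 0 * d 2 * b 0) rel_r4bd_1))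

lemma skE_2_1 : skCon (b 0 * b 0 * b 1 * d 0 * d 0) (b 0 * b 1 * d 0 * d 1 * d 1 * b 0 * b 1 * d 0 * b 1) :=
  (((((((((((((skstepC (b 0 * b 0 * b 1 * d 0 * d 0) ((1:Word)) rel_r4db_1.symm).trans (skstepC (b 0 * b 0 * b 1 * d 0 * d 0 * d 1) (b 1) rel_r4bd_0.symm)).trans (skstepC (b 0 * b 0 * b 1 * d 0 * d 0 * d 1) (b 0 * d 0 * b 1) rel_r4db_2.symm)).trans (skstepC (b 0 * b 0 * b 1 * d 0) (b 2 * b 0 * d 0 * b 1) rel_r3)).trans (skstepC (b 0 * b 0 * b 1 * d 0 * b 2 * b 0) (d 0 * b 1) rel_r4db_1.symm)).trans (skstepC (b 0 * b 0 * b 1 * d 0 * b 2 * b 0 * d 1) (b 1 * d 0 * b 1) rel_r4db_0.symm)).trans (skstepC (b 0 * b 0 * b 1 * d 0 * b 2 * b 0 * d 1 * d 0) (b 0 * b 1 * d 0 * b 1) rel_r4bd_1.symm)).trans (skstepC (b 0 * b 0 * b 1 * d 0) (d 1 * b 0 * b 1 * d 0 * b 1) rel_r9_2_1.symm)).trans (skstepC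 (b 0 * b 0 * b 1) (d 1 * d 0 * b 1 * b 2 * d 1 * b 0 * b 1 * d 0 * b 1) rel_r4db_0)).trans (skstepC (b 0 * b 0 * b 1 * d 1 * d 0 * b 1) (b 2 * d 1 * b 0 * b 1 * d 0 * b 1) rel_r3.symm)).trans (skstepC (b 0 * b 0 * b 1 * d 1 * d 0 * b 1 * d 0 * d 1) (d 1 * b 0 * b 1 * d 0 * b 1) rel_r4db_2)).trans (skstepC (b 0 * b 0) (d 0 * b 1 * d 0 * d 1 * d 1 * b 0 * b 1 * d 0 * b 1) rel_r4bd_1)).trans (skstepC (b 0) (b 1 * d 0 * d 1 * d 1 * b 0 * b 1 * d 0 * b 1) rel_r4bd_0))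

lemma skE_2_2 : skCon (b 1 * b 1 * b 2 * d 1 * d 1) (b 1 * b 2 * d 1 * d 2 * d 2 * b 1 * b 2 * d 1 * b 2) :=
  (((((((((((((skstepC (b 1 * b 1 * b 2 * d 1) (d 1) rel_r4bd_0.symm).trans (skstepC (b 1 * b 1 * b 2 * d 1 * b 0) (d 0 * d 1) rel_r4bd_1.symm)).trans (skstepC (b 1 * b 1 * b 2 * d 1 * b 0 * b 1 * d 1 * d 0 * d 1) ((1:Word)) rel_r4db_2.symm)).trans (skstepC (b 1 * b 1 * b 2 * d 1 * b 0 * b 1 * d 1) (b 2) rel_r3)).trans (skstepC (b 1 * b 1 * b 2 * d 1 * b 0 * b 1) (d 1 * b 2) rel_r4db_2.symm)).trans (skstepC (b 1 * b 1 * b 2 * d 1 * b 0 * b 1 * d 2) (b 2 * d 1 * b 2) rel_r4db_1.symm)).trans (skstepC (b 1 * b 1 * b 2 * d 1 * b 0 * b 1 * d 2 * d 1) (b 1 * b 2 * d 1 * b 2) rel_r4bd_2.symm)).trans (skstepC (b 1 * b 1 * b 2 * d 1) (d 2 * b 1 * b 2 * d 1 * b 2) rel_r9_0_1.symm)).trans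 (skstepC (b 1 * b 1 * b 2) (d 2 * d 1 * b 2 * b 0 * d 2 * b 1 * b 2 * d 1 * b 2) rel_r4db_1)).trans (skstepC (b 1 * b 1 * b 2 * d 2 * d 1 * b 2 * b 0) (d 2 * b 1 * b 2 * d 1 * b 2) rel_r3.symm)).trans (skstepC (b 1 * b 1) (d 1 * b 2 * b 0 * d 0 * d 1 * d 2 * d 2 * b 1 * b 2 * d 1 * b 2) rel_r4bd_2)).trans (skstepC (b 1) (b 2 * b 0 * d 0 * d 1 * d 2 * d 2 * b 1 * b 2 * d 1 * b 2) rel_r4bd_1)).trans (skstepC (b 1 * b 2) (d 1 * d 2 * d 2 * b 1 * b 2 * d 1 * b 2) rel_r4bd_0))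

lemma skE_3_0 : skCon (b 2 * b 2 * d 0 * d 2 * d 2) (d 0 * b 2 * d 0 * d 2 * b 0 * b 0 * b 2 * d 0 * d 2) :=
  (((((((((skstepC (b 2 * b 2 * d 0 * d 2) (d 2) rel_r4bd_0.symm).trans (skstepC (b 2 * b 2 * d 0 * d 2 * b 0) (d 0 * d 2) rel_r4bd_1.symm)).trans (skstepC (b 2 * b 2 * d 0 * d 2 * b 0 * b 1 * d 1) (d 0 * d 2) rel_r4db_2.symm)).trans (skstepC (b 2 * b 2 * d 0 * d 2 * b 0 * b 1) (d 1 * d 2 * b 2 * d 0 * d 2) rel_r4bd_0.symm)).trans (skstepC (b 2 * b 2 * d 0 * d 2 * b 0 * b 1 * b 0) (b 2 * d 0 * d 2) rel_r3)).trans (skstepC ((1:Word)) (b 2 * b 2 * d 0 * d 2 * b 0 * b 1 * b 0 * b 2 * d 0 * d 2) rel_r3.symm)).trans (skstepC (d 0 * d 1) (b 2 * d 0 * d 2 * b 0 * b 1 * b 0 * b 2 * d 0 * d 2) rel_r4db_2)).trans (skstepC (d 0 * d 1) (b 0 * b 2 * d 0 * d 2) rel_r9_1_1)).trans (skstepC (d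 0) (b 2 * d 0 * d 2 * b 0 * b 0 * b 2 * d 0 * d 2) rel_r4db_1))

lemma skE_3_1 : skCon (b 0 * b 0 * d 1 * d 0 * d 0) (d 1 * b 0 * d 1 * d 0 * b 1 * b 1 * b 0 * d 1 * d 0) :=
  (((((((((skstepC (b 0 * b 0 * d 1 * d 0) (d 0) rel_r4bd_1.symm).trans (skstepC (b 0 * b 0 * d 1 * d 0 * b 1) (d 1 * d 0) rel_r4db_0.symm)).trans (skstepC (b 0 * b 0 * d 1 * d 0 * b 1 * d 0) (b 0 * d 1 * d 0) rel_r4db_1.symm)).trans (skstepC (b 0 * b 0 * d 1 * d 0 * b 1 * d 0 * d 1) (b 1 * b 0 * d 1 * d 0) rel_r4db_2.symm)).trans (skstepC (b 0 * b 0 * d 1 * d 0 * b 1) (b 2 * b 1 * b 0 * d 1 * d 0) rel_r3)).trans (skstepC (b 0) (b 0 * d 1 * d 0 * b 1 * b 2 * b 1 * b 0 * d 1 * d 0) rel_r3.symm)).trans (skstepC (b 0 * d 0 * d 1 * d 2) (b 1 * b 0 * d 1 * d 0) rel_r9_2_1)).trans (skstepC (b 0 * d 0 * d 1) (b 0 *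 d 1 * d 0 * b 1 * b 1 * b 0 * d 1 * d 0) rel_r4db_2)).trans (skstepC ((1:Word)) (d 1 * b 0 * d 1 * d 0 * b 1 * b 1 * b 0 * d 1 * d 0) rel_r4bd_0))

lemma skE_3_2 : skCon (b 1 * b 1 * d 2 * d 1 * d 1) (d 2 * b 1 * d 2 * d 1 * b 2 * b 2 * b 1 * d 2 * d 1) :=
  (((((((((skstepC (b 1 * b 1 * d 2 * d 1) (d 1) rel_r4bd_2.symm).trans (skstepC (b 1 * b 1 * d 2 * d 1 * b 2) (d 2 * d 1) rel_r4db_1.symm)).trans (skstepC (b 1 * b 1 * d 2 * d 1 * b 2 * d 1) (b 1 * d 2 * d 1) rel_r4db_2.symm)).trans (skstepC (b 1 * b 1 * d 2 * d 1 * b 2) (d 1 * d 2 * b 2 * b 1 * d 2 * d 1) rel_r4bd_0.symm)).trans (skstepC (b 1 * b 1 * d 2 * d 1 * b 2 * b 0) (b 2 * b 1 * d 2 * d 1) rel_r3)).trans (skstepC (b 1) (b 2 * b 1 * d 2 * d 1) rel_r9_0_1)).trans (skstepC (b 1 * b 0) (b 1 * d 2 * d 1 * b 2 * b 2 * b 1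 * d 2 * d 1) rel_r3.symm)).trans (skstepC (b 1) (d 1 * d 2 * b 1 * d 2 * d 1 * b 2 * b 2 * b 1 * d 2 * d 1) rel_r4bd_0)).trans (skstepC ((1:Word)) (d 2 * b 1 * d 2 * d 1 * b 2 * b 2 * b 1 * d 2 * d 1) rel_r4bd_1))

lemma skE_0_0 : skCon (b 2 * b 2 * a 0 * d 2 * d 2) (b 2 * a 0 * d 2 * d 0 * d 0 * b 2 * b 0 * d 2 * b 0) :=
  ((((((((((((skstepC (b 2 * b 2) (d 2 * d 2) rel_r1a_0).trans (skstepC (b 2 * b 2 * a 1) (d 2 * d 2 * d 2) rel_r4bd_1.symm)).trans (skstepC (b 2 * b 2 * a 1 * b 1) (d 1 * d 2 * d 2 * d 2) rel_r4bd_0.symm)).trans (skstepC (b 2 * b 2 * a 1 * b 1 * b 0) (d 2 * d 2) rel_r3)).trans (skstepC (b 2) (b 0 * d 2 * d 2) rel_r8_1_1.symm)).trans (skstepC ((1:Word)) (b 2 * b 0 * d 2 * d 2) rel_r8_1_1.symm)).trans (skstepC (a 1 * b 1) ((1:Word)) skE_2_0)).trans (skstepC (a 1 * b 1 * b 2 *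 b 0) (d 2 * d 0 * d 0 * b 2 * b 0 * d 2 * b 0) rel_r3.symm)).trans (skstepC ((1:Word)) (b 0 * d 0 * d 1 * d 2 * d 2 * d 0 * d 0 * b 2 * b 0 * d 2 * b 0) rel_r8_1_1)).trans (skstepC (b 2 * a 1 * b 1) (d 1 * d 2 * d 2 * d 0 * d 0 * b 2 * b 0 * d 2 * b 0) rel_r4bd_0)).trans (skstepC (b 2 * a 1) (d 2 * d 2 * d 0 * d 0 * b 2 * b 0 * d 2 * b 0) rel_r4bd_1)).trans (skstepC (b 2) (d 2 * d 0 * d 0 * b 2 * b 0 * d 2 * b 0) rel_r1a_0.symm))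

lemma skE_0_1 : skCon (b 0 * b 0 * a 1 * d 0 * d 0) (b 0 * a 1 * d 0 * d 1 * d 1 * b 0 * b 1 * d 0 * b 1) :=
  ((((((((((((skstepC (b 0 * b 0) (d 0 * d 0) rel_r1a_1).trans (skstepC (b 0 * b 0 * a 2 * d 0) (d 0 * d 0) rel_r4db_1.symm)).trans (skstepC (b 0 * b 0 * a 2 * d 0 * d 1) (b 1 * d 0 * d 0) rel_r4db_2.symm)).trans (skstepC (b 0 * b 0 * a 2) (b 2 * b 1 * d 0 * d 0) rel_r3)).trans (skstepC (b 0) (b 1 * d 0 * d 0) rel_r8_2_1.symm)).trans (skstepC (b 0 * a 2) (b 2 * b 0 * b 1 * d 0 * d 0) rel_r3.symm)).trans (skstepC (b 0 * a 2 * d 0 * d 1) (b 0 * b 1 * d 0 * d 0) rel_r4db_2)).trans (skstepC (b 0 * a 2 * d 0 * d 1) (b 0 * b 1 * d 0 * d 0) rel_r4db_0.symm)).trans (skstepC (b 0 * a 2 * d 0 * d 1 * d 0) ((1:Word)) skE_2_1)).trans (skstepC (b 0 * a 2 * d 0 * d 1) (b 1 * d 0 * d 1 * d 1 * b 0 * b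 1 * d 0 * b 1) rel_r4db_0)).trans (skstepC (b 0 * a 2 * d 0) (d 0 * d 1 * d 1 * b 0 * b 1 * d 0 * b 1) rel_r4db_1)).trans (skstepC (b 0) (d 0 * d 1 * d 1 * b 0 * b 1 * d 0 * b 1) rel_r1a_1.symm))

lemma skE_0_2 : skCon (b 1 * b 1 * a 2 * d 1 * d 1) (b 1 * a 2 * d 1 * d 2 * d 2 * b 1 * b 2 * d 1 * b 2) :=
  ((((((((((((skstepC (b 1 * b 1) (d 1 * d 1) rel_r1a_2).trans (skstepC (b 1 * b 1 * a 0) (d 1 * d 1 * d 1) rel_r4bd_0.symm)).trans (skstepC (b 1 * b 1 * a 0 * b 0 * d 0 * d 1) (d 1 * d 1) rel_r4db_2.symm)).trans (skstepC (b 1 * b 1 * a 0 * b 0) (b 2 * d 1 * d 1) rel_r3)).trans (skstepC (b 1) (b 2 * d 1 * d 1) rel_r8_0_1.symm)).trans (skstepC ((1:Word)) (b 1 * b 2 * d 1 * d 1) rel_r8_0_1.symm)).trans (skstepC (a 0 * b 0) ((1:Word)) skE_2_2)).trans (skstepC (a 0 * b 0 * b 1) (b 2 * d 1 * d 2 * d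 2 * b 1 * b 2 * d 1 * b 2) rel_r3.symm)).trans (skstepC (a 0 * b 0 * b 1 * d 0 * d 1) (d 1 * d 2 * d 2 * b 1 * b 2 * d 1 * b 2) rel_r4db_2)).trans (skstepC ((1:Word)) (d 0 * d 1 * d 1 * d 2 * d 2 * b 1 * b 2 * d 1 * b 2) rel_r8_0_1)).trans (skstepC (b 1 * a 0) (d 1 * d 1 * d 2 * d 2 * b 1 * b 2 * d 1 * b 2) rel_r4bd_0)).trans (skstepC (b 1) (d 1 * d 2 * d 2 * b 1 * b 2 * d 1 * b 2) rel_r1a_2.symm))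

lemma skE_1_0 : skCon (b 2 * b 2 * c 0 * d 2 * d 2) (d 0 * b 2 * d 0 * d 2 * b 0 * b 0 * b 2 * c 0 * d 2) :=
  ((((((((((((((((((((((((skstepC (b 2 * b 2) (d 2 * d 2) rel_r1c_0).trans (skstepC (b 2 * b 2 * b 2 * c 1) (d 2) rel_r1d_2)).trans (skstepC (b 2 * b 2 * b 2 * c 1 * a 0) (d 2) rel_r1c_1)).trans (skstepC (b 2 * b 2 * b 2) (c 2 * d 2) rel_r8_0_2.symm)).trans (skstepC (b 2 * b 2 * b 2 * a 0 * b 0) (c 1 * c 2 * d 2) rel_r4bd_1.symm)).trans (skstepC (b 2 * b 2 * b 2 * a 0 * b 0 * b 1) (d 2) rel_r7_1_0)).trans (skstepC (b 2 * b 2 * b 2 * a 0 * b 0 * b 1 * c 2 * d 1) (c 1 * d 2) rel_r4db_2.symm)).trans (skstepC (b 2 * b 2 * b 2) (c 2 * d 1 * d 2 * b 2 * c 1 * d 2) rel_r8_0_1)).trans (skstepC (b 2 * b 2 * b 2 * b 1 * a 0) (d 1 * d 2 * b 2 * c 1 * d 2) rel_r1c_1.symm)).trans (skstepC (b 2 *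 b 2 * b 2 * b 1 * a 0 * c 1) (d 1 * d 2 * b 2 * c 1 * d 2) rel_r4bd_0.symm)).trans (skstepC (b 2 * b 2 * b 2 * b 1 * a 0 * c 1 * b 0) (b 2 * c 1 * d 2) rel_r3)).trans (skstepC (b 2 * b 2) (b 2 * b 1 * a 0 * c 1 * b 0 * b 2 * c 1 * d 2) rel_r3.symm)).trans (skstepC (b 2 * b 2 * d 0 * d 1) (b 1 * a 0 * c 1 * b 0 * b 2 * c 1 * d 2) rel_r4db_2)).trans (skstepC (b 2 * b 2 * d 0 * d 1 * b 1) (b 0 * b 2 * c 1 * d 2) rel_r1d_2.symm)).trans (skstepC ((1:Word)) (b 2 * b 2 * d 0 * d 1 * b 1 * d 2 * b 0 * b 2 * c 1 * d 2) rel_r3.symm)).trans (skstepC (d 0 * d 1) (b 2 * d 0 * d 1 * b 1 * d 2 * b 0 * b 2 * c 1 * d 2) rel_r4db_2)).trans (skstepC (d 0 * d 1 * b 2 * d 0 * d 1 * b 1 * d 2 * b 0) (b 2 * c 1 * d 2) rel_r4db_2.symm)).trans (skstepC (d 0 * d 1 * b 2 * d 0) (d 2 * b 0 * d 2 * b 2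 * b 2 * c 1 * d 2) rel_r4db_1)).trans (skstepC (d 0 * d 1 * b 2 * d 0 * d 2 * b 0) (d 2 * b 2 * b 2 * c 1 * d 2) rel_r4bd_1.symm)).trans (skstepC (d 0 * d 1) (d 1 * d 2 * b 2 * b 2 * c 1 * d 2) rel_r9_1_1)).trans (skstepC (d 0) (b 2 * d 0 * d 2 * b 0 * d 1 * d 2 * b 2 * b 2 * c 1 * d 2) rel_r4db_1)).trans (skstepC (d 0 * b 2 * d 0 * d 2 * b 0) (d 1 * d 2 * b 2 * b 2 * c 1 * d 2) rel_r4bd_0.symm)).trans (skstepC (d 0 * b 2 * d 0 * d 2 * b 0 * b 0) (b 2 * b 2 * c 1 * d 2) rel_r3)).trans (skstepC (d 0 * b 2 * d 0 * d 2 * b 0 * b 0 * b 2) (d 2) rel_r1c_0.symm))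

lemma skE_1_1 : skCon (b 0 * b 0 * c 1 * d 0 * d 0) (d 1 * b 0 * d 1 * d 0 * b 1 * b 1 * b 0 * c 1 * d 0) :=
  ((((((((((((((((((((((((skstepC (b 0 * b 0 * c 1) (d 0) rel_r1d_0).trans (skstepC (b 0 * b 0) (a 1 * c 2 * d 0) rel_r1c_1)).trans (skstepC (b 0 * b 0 * b 0 * c 2 * a 1) (d 0) rel_r1c_2)).trans (skstepC (b 0 * b 0 * b 0) (c 0 * d 0) rel_r8_1_2.symm)).trans (skstepC (b 0 * b 0 * b 0 * a 1 * b 1) (c 2 * c 0 * d 0) rel_r4bd_2.symm)).trans (skstepC (b 0 * b 0 * b 0 * a 1 * b 1 * b 2) (d 0) rel_r7_2_0)).trans (skstepC (b 0 * b 0 * b 0) (c 0 * d 2 * c 2 * d 0) rel_r8_1_1)).trans (skstepC (b 0 * b 0 * b 0 * b 2 * a 1) (d 2 * c 2 * d 0) rel_r1c_2.symm)).trans (skstepC (b 0 * b 0 * b 0 * b 2 * a 1 * c 2) (d 2 * c 2 * d 0) rel_r4bd_1.symm)).trans (skstepC (b 0 * b 0 * b 0 * b 2 * a 1 * c 2 *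 b 1) (d 1 * d 2 * c 2 * d 0) rel_r4bd_0.symm)).trans (skstepC (b 0 * b 0 * b 0 * b 2 * a 1 * c 2 * b 1 * b 0) (c 2 * d 0) rel_r3)).trans (skstepC (b 0 * b 0 * b 0) (b 2 * a 1 * c 2 * b 1 * b 0 * c 2 * d 0) rel_r3.symm)).trans (skstepC (b 0 * b 0 * b 0 * d 0 * d 1) (a 1 * c 2 * b 1 * b 0 * c 2 * d 0) rel_r4db_2)).trans (skstepC (b 0 * b 0 * b 0 * d 0 * d 1 * a 1 * c 2 * b 1) (b 0 * c 2 * d 0) rel_r4db_0.symm)).trans (skstepC (b 0 * b 0) (d 1 * a 1 * c 2 * b 1 * d 0 * b 0 * b 0 * c 2 * d 0) rel_r4bd_0)).trans (skstepC (b 0 * b 0 * d 1 * a 1 * c 2 * b 1 * d 0) (b 0 * b 0 * c 2 * d 0) rel_r4db_1.symm)).trans (skstepC (b 0 * b 0 * d 1 * a 1 * c 2 * b 1 * d 0 * d 1 * b 1 * b 0) (d 0) rel_r1c_1.symm)).trans (skstepC (b 0 * b 0 * d 1) (b 1 * d 0 * d 1 * b 1 * b 0 * c 1 * d 0) rel_r1d_0.symm)).trans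 (skstepC (b 0 * b 0 * d 1 * d 0 * b 1 * d 0 * d 1) (b 1 * b 0 * c 1 * d 0) rel_r4db_2.symm)).trans (skstepC (b 0 * b 0 * d 1 * d 0 * b 1) (b 2 * b 1 * b 0 * c 1 * d 0) rel_r3)).trans (skstepC (b 0) (b 0 * d 1 * d 0 * b 1 * b 2 * b 1 * b 0 * c 1 * d 0) rel_r3.symm)).trans (skstepC (b 0 * d 0 * d 1 * d 2) (b 1 * b 0 * c 1 * d 0) rel_r9_2_1)).trans (skstepC (b 0 * d 0 * d 1) (b 0 * d 1 * d 0 * b 1 * b 1 * b 0 * c 1 * d 0) rel_r4db_2)).trans (skstepC ((1:Word)) (d 1 * b 0 * d 1 * d 0 * b 1 * b 1 * b 0 * c 1 * d 0) rel_r4bd_0))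

lemma skE_1_2 : skCon (b 1 * b 1 * c 2 * d 1 * d 1) (d 2 * b 1 * d 2 * d 1 * b 2 * b 2 * b 1 * c 2 * d 1) :=
  ((((((((((((((((((((((((skstepC (b 1 * b 1 * c 2) (d 1) rel_r1d_1).trans (skstepC (b 1 * b 1 * c 2 * a 2) (d 1) rel_r1c_0)).trans (skstepC (b 1 * b 1) (a 2 * b 2 * c 1 * d 1) rel_r1c_2)).trans (skstepC (b 1 * b 1 * b 1) (c 1 * d 1) rel_r8_2_2.symm)).trans (skstepC (b 1 * b 1 * b 1 * a 2 * b 2) (c 0 * c 1 * d 1) rel_r4bd_0.symm)).trans (skstepC (b 1 * b 1 * b 1 * a 2 * b 2 * b 0) (d 1) rel_r7_0_0)).trans (skstepC (b 1 * b 1 * b 1 * a 2 * b 2 * b 0 * c 1 * d 0) (c 0 * d 1) rel_r4db_1.symm)).trans (skstepC (b 1 * b 1 * b 1 * a 2 * b 2 * b 0 * c 1 * d 0 * d 1) (d 1) rel_r1c_2.symm)).trans (skstepC (b 1 * b 1 * b 1 * a 2 * b 2 * b 0 * c 1 * d 0 * d 1) (c 2 * d 1) rel_r4db_2.symm)).trans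 (skstepC (b 1 * b 1 * b 1 * a 2 * b 2 * b 0 * c 1) (b 2 * c 2 * d 1) rel_r3)).trans (skstepC (b 1 * b 1 * b 1) (c 1 * b 2 * c 2 * d 1) rel_r8_2_1)).trans (skstepC (b 1 * b 1 * b 1 * b 0) (a 2 * b 2 * c 1 * b 2 * c 2 * d 1) rel_r3.symm)).trans (skstepC (b 1 * b 1 * b 1) (d 1 * d 2 * a 2 * b 2 * c 1 * b 2 * c 2 * d 1) rel_r4bd_0)).trans (skstepC (b 1 * b 1 * b 1 * d 1 * d 2 * a 2 * b 2 * c 1 * b 2) (c 2 * d 1) rel_r4db_1.symm)).trans (skstepC (b 1 * b 1) (d 2 * a 2 * b 2 * c 1 * b 2 * d 1 * b 1 * c 2 * d 1) rel_r4bd_1)).trans (skstepC (b 1 * b 1 * d 2 * a 2 * b 2 * c 1 * b 2 * d 1) (b 1 * c 2 * d 1) rel_r4db_2.symm)).trans (skstepC (b 1 * b 1 * d 2 * a 2) (b 2 * d 1 * d 2 * b 2 * b 1 * c 2 * d 1) rel_r1c_0.symm)).trans (skstepC (b 1 * b 1 * d 2) (b 2 * d 1 * d 2 * b 2 * b 1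 * c 2 * d 1) rel_r1d_1.symm)).trans (skstepC (b 1 * b 1 * d 2 * d 1 * b 2) (d 1 * d 2 * b 2 * b 1 * c 2 * d 1) rel_r4bd_0.symm)).trans (skstepC (b 1 * b 1 * d 2 * d 1 * b 2 * b 0) (b 2 * b 1 * c 2 * d 1) rel_r3)).trans (skstepC (b 1) (b 2 * b 1 * c 2 * d 1) rel_r9_0_1)).trans (skstepC (b 1 * b 0) (b 1 * d 2 * d 1 * b 2 * b 2 * b 1 * c 2 * d 1) rel_r3.symm)).trans (skstepC (b 1) (d 1 * d 2 * b 1 * d 2 * d 1 * b 2 * b 2 * b 1 * c 2 * d 1) rel_r4bd_0)).trans (skstepC ((1:Word)) (d 2 * b 1 * d 2 * d 1 * b 2 * b 2 * b 1 * c 2 * d 1) rel_r4bd_1))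

theorem equiv_41_44 : ∀ i : ZMod 3,
    skCon (b (i-1)^2 * a i * d (i-1)^2)
          ((b (i-1) * a i * d (i-1)) * d i^2 * (b (i-1) * b i * d (i-1)) * b i) ∧
    skCon (b (i-1)^2 * c i * d (i-1)^2)
          (d i * (b (i-1) * d i * d (i-1)) * b i^2 * (b (i-1) * c i * d (i-1))) ∧
    skCon (b (i-1)^2 * b i * d (i-1)^2)
          ((b (i-1) * b i * d (i-1)) * d i^2 * (b (i-1) * b i * d (i-1)) * b i) ∧
    skCon (b (i-1)^2 * d i * d (i-1)^2)
          (d i * (b (i-1) * d i * d (i-1)) * b i^2 * (b (i-1) * d i * d (i-1))) := by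
  intro i
  have hi : i = 0 ∨ i = 1 ∨ i = 2 :=
    (by decide : ∀ j : ZMod 3, j = 0 ∨ j = 1 ∨ j = 2) i
  rcases hi with rfl | rfl | rfl
  · simp only [zm4, pow_two]
    exact ⟨skE_0_0, skE_1_0, skE_2_0, skE_3_0⟩
  · simp only [zm5, pow_two]
    exact ⟨skE_0_1, skE_1_1, skE_2_1, skE_3_1⟩
  · simp only [zm6, pow_two]
    exact ⟨skE_0_2, skE_1_2, skE_2_2, skE_3_2⟩
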